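/- arXiv:2405.09437 — 6 statements merged into one kernel-verified Lean document; each statement's English description precedes it below -/
import Mathlib

section
/- If X is a locally compact Hausdorff second-countable space and Y is a second-countable space, then the space of continuous functions with open domain from X to Y, equipped with the compact-open topology (subbasic sets ⟨K,V⟩ = {f : K ⊆ dom f and f(K) ⊆ V} for K compact and V open), is second countable. -/
open Set Topology Filter

/-- A continuous partial function from `X` to `Y` with open domain. -/
structure Cod (X Y : Type*) [TopologicalSpace X] [TopologicalSpace Y] where
  dom : Set X
  toFun : dom → Y
  isOpen_dom : IsOpen dom
  continuous_toFun : Continuous toFun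

namespace Cod

variable {X Y : Type*} [TopologicalSpace X] [TopologicalSpace Y]

/-- The image of a subset of `X` under a partial function. -/
def image (f : Cod X Y) (K : Set X) : Set Y := f.toFun '' ((↑) ⁻¹' K)

/-- The empty partial function. -/
def empty (X Y : Type*) [TopologicalSpace X] [TopologicalSpace Y] : Cod X Y where
  dom := ∅
  toFun := fun x => absurd x.2 (Set.notMem_empty _)
  isOpen_dom := isOpen_empty
  continuous_toFun := by
    rw [continuous_iff_continuousAt]
    rintro ⟨x, hx⟩
    exact absurd hx (Set.notMem_empty x)

end Cod

/-- The compact-open topology on `Cod X Y`, generated by the sets `⟨K,V⟩`. -/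
def codCO (X Y : Type*) [TopologicalSpace X] [TopologicalSpace Y] : TopologicalSpace (Cod X Y) :=
  TopologicalSpace.generateFrom
    {S | ∃ (K : Set X) (V : Set Y), IsCompact K ∧ IsOpen V ∧
      S = {f : Cod X Y | K ⊆ f.dom ∧ f.image K ⊆ V}}

section Aux

variable {X Y : Type*} [TopologicalSpace X] [TopologicalSpace Y]

def codBox (K : Set X) (V : Set Y) : Set (Cod X Y) :=
  {f : Cod X Y | K ⊆ f.dom ∧ f.image K ⊆ V}

def codSub (X Y : Type*) [TopologicalSpace X] [TopologicalSpace Y]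
    [SecondCountableTopology X] [SecondCountableTopology Y] : Set (Set (Cod X Y)) :=
  (fun p : Set X × Set Y => codBox (closure p.1) p.2) ''
    {p | p.1 ∈ TopologicalSpace.countableBasis X ∧ p.2 ∈ TopologicalSpace.countableBasis Y ∧
      IsCompact (closure p.1)}

lemma codSub_countable (X Y : Type*) [TopologicalSpace X] [TopologicalSpace Y]
    [SecondCountableTopology X] [SecondCountableTopology Y] : (codSub X Y).Countable :=
  (((TopologicalSpace.countable_countableBasis X).prod
    (TopologicalSpace.countable_countableBasis Y)).mono
      (fun p hp => Set.mem_prod.2 ⟨hp.1, hp.2.1⟩)).image _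

lemma exists_basis_closure_compact [LocallyCompactSpace X] [T2Space X]
    [SecondCountableTopology X] {x : X} {O : Set X} (hO : IsOpen O) (hx : x ∈ O) :
    ∃ U ∈ TopologicalSpace.countableBasis X,
      x ∈ U ∧ IsCompact (closure U) ∧ closure U ⊆ O := by
  obtain ⟨K, hKc, hxK, hKO⟩ := exists_compact_subset hO hx
  obtain ⟨U, hUb, hxU, hUK⟩ :=
    (TopologicalSpace.isBasis_countableBasis X).exists_subset_of_mem_open hxK isOpen_interior
  have hclU : closure U ⊆ K :=
    (closure_mono (hUK.trans interior_subset)).trans (hKc.isClosed.closure_subset)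
  exact ⟨U, hUb, hxU, hKc.of_isClosed_subset isClosed_closure hclU, hclU.trans hKO⟩

lemma isOpen_codBox [LocallyCompactSpace X] [T2Space X] [SecondCountableTopology X]
    [SecondCountableTopology Y] {K : Set X} {V : Set Y} (hK : IsCompact K) (hV : IsOpen V) :
    IsOpen[TopologicalSpace.generateFrom (codSub X Y)] (codBox K V) := by
  letI := TopologicalSpace.generateFrom (codSub X Y)
  rw [isOpen_iff_forall_mem_open]
  rintro f ⟨hKdom, hfKV⟩
  have key : ∀ x ∈ K, ∃ U W, U ∈ TopologicalSpace.countableBasis X ∧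
      W ∈ TopologicalSpace.countableBasis Y ∧ IsCompact (closure U) ∧ x ∈ U ∧
      f ∈ codBox (closure U) W ∧ W ⊆ V := by
    intro x hx
    have hxd : x ∈ f.dom := hKdom hx
    have hfxV : f.toFun ⟨x, hxd⟩ ∈ V := hfKV ⟨⟨x, hxd⟩, hx, rfl⟩
    obtain ⟨W, hWb, hfW, hWV⟩ :=
      (TopologicalSpace.isBasis_countableBasis Y).exists_subset_of_mem_open hfxV hV
    have hPW : IsOpen (f.toFun ⁻¹' W) :=
      ((TopologicalSpace.isBasis_countableBasis Y).isOpen hWb).preimage f.continuous_toFun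
    have hO : IsOpen ((↑) '' (f.toFun ⁻¹' W) : Set X) :=
      f.isOpen_dom.isOpenMap_subtype_val _ hPW
    obtain ⟨U, hUb, hxU, hUc, hUO⟩ :=
      exists_basis_closure_compact hO ⟨⟨x, hxd⟩, hfW, rfl⟩
    refine ⟨U, W, hUb, hWb, hUc, hxU, ⟨?_, ?_⟩, hWV⟩
    · exact hUO.trans (Subtype.coe_image_subset _ _)
    · rintro _ ⟨z, hz, rfl⟩
      obtain ⟨z', hz'W, hz'⟩ := hUO hz
      rwa [Subtype.coe_injective hz'] at hz'W
  choose! U W hUb hWb hUc hxU hfbox hWV using key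
  obtain ⟨s, hsK, hcov⟩ := hK.elim_nhds_subcover U (fun x hx =>
    ((TopologicalSpace.isBasis_countableBasis X).isOpen (hUb x hx)).mem_nhds (hxU x hx))
  refine ⟨⋂ x ∈ s, codBox (closure (U x)) (W x), ?_, ?_, ?_⟩
  · rintro g hg
    have hmem : ∀ x ∈ s, g ∈ codBox (closure (U x)) (W x) := by
      simpa [Set.mem_iInter] using hg
    constructor
    · intro y hy
      obtain ⟨x, hxs, hyU⟩ := Set.mem_iUnion₂.1 (hcov hy)
      exact (hmem x hxs).1 (subset_closure hyU)
    · rintro _ ⟨z, hz, rfl⟩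
      obtain ⟨x, hxs, hyU⟩ := Set.mem_iUnion₂.1 (hcov hz)
      exact hWV x (hsK x hxs) ((hmem x hxs).2 ⟨z, subset_closure hyU, rfl⟩)
  · exact isOpen_biInter_finset (fun x hxs =>
      TopologicalSpace.isOpen_generateFrom_of_mem
        ⟨(U x, W x), ⟨hUb x (hsK x hxs), hWb x (hsK x hxs), hUc x (hsK x hxs)⟩, rfl⟩)
  · exact Set.mem_iInter₂.2 fun x hxs => hfbox x (hsK x hxs)

end Aux


/-- If `X` is locally compact Hausdorff second-countable and `Y` is second-countable, then
`C_od(X,Y)` with the compact-open topology is second countable. -/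
theorem stmt1 (X Y : Type*) [TopologicalSpace X] [LocallyCompactSpace X] [T2Space X]
    [SecondCountableTopology X] [TopologicalSpace Y] [SecondCountableTopology Y] :
    @SecondCountableTopology (Cod X Y) (codCO X Y) := by
  have hgen : codCO X Y = TopologicalSpace.generateFrom (codSub X Y) := by
    refine le_antisymm ?_ (le_generateFrom ?_)
    · apply TopologicalSpace.generateFrom_anti
      rintro _ ⟨⟨U, W⟩, ⟨hUb, hWb, hUc⟩, rfl⟩
      exact ⟨closure U, W, hUc, (TopologicalSpace.isBasis_countableBasis Y).isOpen hWb, rfl⟩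
    · rintro _ ⟨K, V, hK, hV, rfl⟩
      exact isOpen_codBox hK hV
  rw [hgen]
  letI := TopologicalSpace.generateFrom (codSub X Y)
  exact (TopologicalSpace.isTopologicalBasis_of_subbasis rfl).secondCountableTopology
    ((Set.countable_setOf_finite_subset (codSub_countable X Y)).image _)
end

section
/- Let X be locally compact Hausdorff second countable with a countable basis 𝓑 of relatively compact open sets closed under finite unions. Then the family {⟨cl(U), V⟩ : U, V ∈ 𝓑} is a countable subbasis for the compact-open topology on the space of continuous partial functions with open domain from X to X. -/
open Set Topology Filter

/-- Given a countable basis `B` of relatively compact open sets closed under finite unions,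
the family `{⟨cl U, V⟩ : U, V ∈ B}` is a countable subbasis for the compact-open topology
on `C_od(X,X)`. -/
theorem stmt2 (X : Type*) [TopologicalSpace X] [LocallyCompactSpace X] [T2Space X]
    [SecondCountableTopology X]
    (B : Set (Set X)) (hBbasis : TopologicalSpace.IsTopologicalBasis B) (hBc : B.Countable)
    (hBrc : ∀ U ∈ B, IsCompact (closure U))
    (hBu : ∀ U ∈ B, ∀ V ∈ B, U ∪ V ∈ B) :
    ({S | ∃ U ∈ B, ∃ V ∈ B,
        S = {f : Cod X X | closure U ⊆ f.dom ∧ f.image (closure U) ⊆ V}} :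
      Set (Set (Cod X X))).Countable ∧
    codCO X X = TopologicalSpace.generateFrom
      {S | ∃ U ∈ B, ∃ V ∈ B,
        S = {f : Cod X X | closure U ⊆ f.dom ∧ f.image (closure U) ⊆ V}} := by
  classical
  set F : Set (Set (Cod X X)) := {S | ∃ U ∈ B, ∃ V ∈ B,
      S = {f : Cod X X | closure U ⊆ f.dom ∧ f.image (closure U) ⊆ V}} with hF
  constructor
  · have hsub : F ⊆ (fun p : Set X × Set X =>
        {f : Cod X X | closure p.1 ⊆ f.dom ∧ f.image (closure p.1) ⊆ p.2}) '' (B ×ˢ B) := by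
      rintro S ⟨U, hU, V, hV, rfl⟩
      exact ⟨(U, V), ⟨hU, hV⟩, rfl⟩
    exact (((hBc.prod hBc).image _).mono hsub)
  · letI T : TopologicalSpace (Cod X X) := TopologicalSpace.generateFrom F
    apply le_antisymm
    · apply TopologicalSpace.generateFrom_anti
      rintro S ⟨U, hU, V, hV, rfl⟩
      exact ⟨closure U, V, hBrc U hU, hBbasis.isOpen hV, rfl⟩
    · apply le_generateFrom
      rintro S ⟨K, V, hK, hV, rfl⟩
      rw [isOpen_iff_forall_mem_open]
      rintro f ⟨hKdom, hKV⟩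
      have key : ∀ x : K, ∃ U ∈ B, ∃ Vb ∈ B, (x : X) ∈ U ∧ closure U ⊆ f.dom ∧
          f.image (closure U) ⊆ Vb ∧ Vb ⊆ V := by
        rintro ⟨x, hx⟩
        have hxd : x ∈ f.dom := hKdom hx
        have hfx : f.toFun ⟨x, hxd⟩ ∈ V := hKV ⟨⟨x, hxd⟩, hx, rfl⟩
        obtain ⟨Vb, hVb, hfxVb, hVbV⟩ := hBbasis.exists_subset_of_mem_open hfx hV
        set W : Set X := Subtype.val '' (f.toFun ⁻¹' Vb) with hWdef
        have hWopen : IsOpen W :=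
          f.isOpen_dom.isOpenMap_subtype_val _
            (f.continuous_toFun.isOpen_preimage _ (hBbasis.isOpen hVb))
        have hxW : x ∈ W := ⟨⟨x, hxd⟩, hfxVb, rfl⟩
        obtain ⟨L, hL, hxL, hLW⟩ := exists_compact_between (isCompact_singleton (x := x))
          hWopen (singleton_subset_iff.2 hxW)
        obtain ⟨U, hU, hxU, hUL⟩ := hBbasis.exists_subset_of_mem_open
          (hxL rfl) isOpen_interior
        have hclU : closure U ⊆ W :=
          (closure_minimal (hUL.trans interior_subset) hL.isClosed).trans hLW
        have hWdom : W ⊆ f.dom := by rintro _ ⟨w, _, rfl⟩; exact w.2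
        refine ⟨U, hU, Vb, hVb, hxU, hclU.trans hWdom, ?_, hVbV⟩
        rintro _ ⟨w, hw, rfl⟩
        obtain ⟨w', hw', hww'⟩ := hclU hw
        rwa [show w = w' from Subtype.ext hww'.symm]
      choose U hUB Vb hVbB hxU hcldom himg hVbV using key
      obtain ⟨t, ht⟩ := hK.elim_finite_subcover U (fun i => hBbasis.isOpen (hUB i))
        (fun x hx => mem_iUnion.2 ⟨⟨x, hx⟩, hxU ⟨x, hx⟩⟩)
      refine ⟨⋂ i ∈ t, {g : Cod X X | closure (U i) ⊆ g.dom ∧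
          g.image (closure (U i)) ⊆ Vb i}, ?_, ?_, ?_⟩
      · rintro g hg
        simp only [mem_iInter, mem_setOf_eq] at hg
        constructor
        · intro x hx
          obtain ⟨i, hi, hxi⟩ := mem_iUnion₂.1 (ht hx)
          exact (hg i hi).1 (subset_closure hxi)
        · rintro _ ⟨w, hw, rfl⟩
          obtain ⟨i, hi, hxi⟩ := mem_iUnion₂.1 (ht hw)
          exact hVbV i ((hg i hi).2 ⟨w, subset_closure hxi, rfl⟩)
      · exact isOpen_biInter_finset fun i _ =>
          TopologicalSpace.isOpen_generateFrom_of_mem ⟨U i, hUB i, Vb i, hVbB i, rfl⟩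
      · exact mem_iInter₂.2 fun i _ => ⟨hcldom i, himg i⟩
end

section
/- If X is a locally compact Hausdorff second-countable space, then the Fell topology on CL(X), the hyperspace of closed subsets of X including the empty set, is compact and metrizable, hence second countable. -/
open Set Topology Filter

/-- The hyperspace of closed subsets of `X`, including the empty set. -/
def CL (X : Type*) [TopologicalSpace X] := {A : Set X // IsClosed A}

/-- The Fell topology on `CL X`. -/
def fellTop (X : Type*) [TopologicalSpace X] : TopologicalSpace (CL X) :=
  TopologicalSpace.generateFrom
    ({S | ∃ K : Set X, IsCompact K ∧ S = {A : CL X | A.1 ⊆ Kᶜ}} ∪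
     {S | ∃ V : Set X, IsOpen V ∧ V.Nonempty ∧ S = {A : CL X | (A.1 ∩ V).Nonempty}})

section Aux

variable {X : Type*} [TopologicalSpace X]

local instance fellInst : TopologicalSpace (CL X) := fellTop X

lemma fell_isOpen_miss {K : Set X} (hK : IsCompact K) :
    IsOpen {A : CL X | A.1 ⊆ Kᶜ} :=
  TopologicalSpace.GenerateOpen.basic _ (Or.inl ⟨K, hK, rfl⟩)

lemma fell_isOpen_hit {V : Set X} (hV : IsOpen V) :
    IsOpen {A : CL X | (A.1 ∩ V).Nonempty} := by
  rcases V.eq_empty_or_nonempty with rfl | hne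
  · simp only [inter_empty, Set.not_nonempty_empty]
    simp only [setOf_false]; exact isOpen_empty
  · exact TopologicalSpace.GenerateOpen.basic _ (Or.inr ⟨V, hV, hne, rfl⟩)

/-- Fell topology is always compact. -/
lemma fell_compactSpace : CompactSpace (CL X) := by
  rw [← isCompact_univ_iff, isCompact_iff_ultrafilter_le_nhds]
  intro f _
  classical
  set A : Set X := {x : X | ∀ U : Set X, IsOpen U → x ∈ U →
      {B : CL X | (B.1 ∩ U).Nonempty} ∈ f} with hA
  have hAc : IsClosed A := by
    rw [← isOpen_compl_iff, isOpen_iff_forall_mem_open]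
    intro x hx
    simp only [mem_compl_iff, hA, mem_setOf_eq, not_forall] at hx
    obtain ⟨U, hU, hxU, hf⟩ := hx
    exact ⟨U, fun y hy hyA => hf (hyA U hU hy), hU, hxU⟩
  refine ⟨⟨A, hAc⟩, mem_univ _, ?_⟩
  refine le_of_le_of_eq ?_ TopologicalSpace.nhds_generateFrom.symm
  refine le_iInf fun s => le_iInf fun hs => ?_
  obtain ⟨hmem, hgen⟩ := hs
  rw [Filter.le_principal_iff]
  rcases hgen with ⟨K, hK, rfl⟩ | ⟨V, hV, hVne, rfl⟩
  · -- miss set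
    by_contra hnot
    have hc : {B : CL X | B.1 ⊆ Kᶜ}ᶜ ∈ f := Ultrafilter.compl_mem_iff_notMem.2 hnot
    have hc' : {B : CL X | (B.1 ∩ K).Nonempty} ∈ f := by
      refine Filter.mem_of_superset hc ?_
      intro B hB
      simp only [mem_compl_iff, mem_setOf_eq, not_subset_iff_exists_mem_notMem] at hB
      obtain ⟨y, hy, hy'⟩ := hB
      exact ⟨y, hy, not_not.1 hy'⟩
    -- for each x ∈ K, x ∉ A
    have hxA : ∀ x : K, ∃ U : Set X, IsOpen U ∧ (x : X) ∈ U ∧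
        {B : CL X | B.1 ∩ U = ∅} ∈ f := by
      rintro ⟨x, hx⟩
      have : x ∉ A := fun h => (hmem h) hx
      simp only [hA, mem_setOf_eq, not_forall] at this
      obtain ⟨U, hU, hxU, hf⟩ := this
      refine ⟨U, hU, hxU, ?_⟩
      have := Ultrafilter.compl_mem_iff_notMem.2 hf
      refine Filter.mem_of_superset this ?_
      intro B hB
      simpa [Set.not_nonempty_iff_eq_empty] using hB
    choose U hUo hxU hUf using hxA
    obtain ⟨t, ht⟩ := hK.elim_finite_subcover U hUo
      (fun x hx => mem_iUnion.2 ⟨⟨x, hx⟩, hxU ⟨x, hx⟩⟩)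
    have hbig : (⋂ x ∈ t, {B : CL X | B.1 ∩ U x = ∅}) ∈ f :=
      (Filter.biInter_mem t.finite_toSet).2 fun x _ => hUf x
    obtain ⟨B, hB1, hB2⟩ := Filter.nonempty_of_mem (Filter.inter_mem hbig hc')
    obtain ⟨y, hyB, hyK⟩ := hB2
    obtain ⟨x, hxt, hyU⟩ := mem_iUnion₂.1 (ht hyK)
    have h := mem_iInter₂.1 hB1 x hxt
    rw [mem_setOf_eq, eq_empty_iff_forall_notMem] at h
    exact h y ⟨hyB, hyU⟩
  · -- hit set
    obtain ⟨x, hxA, hxV⟩ := hmem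
    exact hxA V hV hxV

lemma fell_t2 [LocallyCompactSpace X] : T2Space (CL X) := by
  have key : ∀ (A B : CL X), ∀ x : X, x ∈ A.1 → x ∉ B.1 →
      ∃ u v : Set (CL X), IsOpen u ∧ IsOpen v ∧ A ∈ u ∧ B ∈ v ∧ Disjoint u v := by
    rintro ⟨A, hA⟩ ⟨B, hB⟩ x hxA hxB
    obtain ⟨K, hK, hxK, hKB⟩ := exists_compact_subset hB.isOpen_compl hxB
    refine ⟨{C : CL X | (C.1 ∩ interior K).Nonempty}, {C : CL X | C.1 ⊆ Kᶜ},
      fell_isOpen_hit isOpen_interior, fell_isOpen_miss hK, ⟨x, hxA, hxK⟩,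
      fun y hy hyK => hKB hyK hy, ?_⟩
    rw [Set.disjoint_left]
    rintro C ⟨y, hyC, hyK⟩ hC
    exact (hC hyC) (interior_subset hyK)
  constructor
  intro A B hne
  have : ¬(A.1 ⊆ B.1 ∧ B.1 ⊆ A.1) := by
    intro ⟨h1, h2⟩
    exact hne (Subtype.ext (le_antisymm h1 h2))
  rw [not_and_or] at this
  rcases this with h | h
  · obtain ⟨x, hxA, hxB⟩ := not_subset_iff_exists_mem_notMem.1 h
    exact key A B x hxA hxB
  · obtain ⟨x, hxB, hxA⟩ := not_subset_iff_exists_mem_notMem.1 h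
    obtain ⟨u, v, hu, hv, hBu, hAv, hd⟩ := key B A x hxB hxA
    exact ⟨v, u, hv, hu, hAv, hBu, hd.symm⟩

lemma fell_secondCountable [LocallyCompactSpace X] [T2Space X] [SecondCountableTopology X] :
    SecondCountableTopology (CL X) := by
  classical
  obtain ⟨b, hbc, hbe, hb⟩ := TopologicalSpace.exists_countable_basis X
  set b' : Set (Set X) := {U ∈ b | IsCompact (closure U)} with hb'
  -- b' is a basis-like family: refines any open set at any point
  have hb'base : ∀ (x : X) (W : Set X), IsOpen W → x ∈ W →
      ∃ U ∈ b', x ∈ U ∧ closure U ⊆ W := by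
    intro x W hW hxW
    obtain ⟨L, hL, hxL, hLW⟩ := exists_compact_subset hW hxW
    obtain ⟨U, hUb, hxU, hUL⟩ := hb.exists_subset_of_mem_open hxL isOpen_interior
    have hcl : closure U ⊆ L := by
      calc closure U ⊆ closure (interior L) := closure_mono hUL
        _ ⊆ L := closure_minimal interior_subset hL.isClosed
    exact ⟨U, ⟨hUb, hL.of_isClosed_subset isClosed_closure hcl⟩, hxU, hcl.trans hLW⟩
  set g : Set (Set (CL X)) :=
    ((fun s : Set (Set X) => {A : CL X | A.1 ⊆ (closure (⋃₀ s))ᶜ}) ''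
      {s | s.Finite ∧ s ⊆ b'}) ∪
    ((fun V : Set X => {A : CL X | (A.1 ∩ V).Nonempty}) '' b) with hg
  have hgc : g.Countable := by
    refine Set.Countable.union (Set.Countable.image ?_ _) (hbc.image _)
    exact Set.countable_setOf_finite_subset (hbc.mono (sep_subset _ _))
  -- closure of finite sUnion of b' elements is compact
  have hcomp : ∀ s : Set (Set X), s.Finite → s ⊆ b' → IsCompact (closure (⋃₀ s)) ∧
      closure (⋃₀ s) ⊆ ⋃ U ∈ s, closure U := by
    intro s hs hsb
    have h1 : IsClosed (⋃ U ∈ s, closure U) :=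
      hs.isClosed_biUnion fun U _ => isClosed_closure
    have h2 : closure (⋃₀ s) ⊆ ⋃ U ∈ s, closure U := by
      refine closure_minimal ?_ h1
      exact fun y ⟨U, hU, hy⟩ => mem_biUnion hU (subset_closure hy)
    have h3 : IsCompact (⋃ U ∈ s, closure U) :=
      hs.isCompact_biUnion fun U hU => (hsb hU).2
    exact ⟨h3.of_isClosed_subset isClosed_closure h2, h2⟩
  refine ⟨⟨g, hgc, ?_⟩⟩
  refine le_antisymm ?_ ?_
  · -- fellTop ≤ generateFrom g : every element of g is fell-open
    refine le_generateFrom ?_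
    rintro S (⟨s, ⟨hsf, hsb⟩, rfl⟩ | ⟨V, hVb, rfl⟩)
    · exact fell_isOpen_miss (hcomp s hsf hsb).1
    · exact fell_isOpen_hit (hb.isOpen hVb)
  · -- generateFrom g ≤ fellTop: every fell generator is open in generateFrom g
    show fellTop X ≥ _
    rw [fellTop]
    refine le_generateFrom ?_
    rintro S (⟨K, hK, rfl⟩ | ⟨V, hV, hVne, rfl⟩)
    · -- miss set: union over finite covers of K by b' with closures avoiding A
      have key : ∀ A : CL X, A.1 ⊆ Kᶜ → ∃ s : Set (Set X),
          ((s.Finite ∧ s ⊆ b') ∧ K ⊆ ⋃₀ s) ∧ A.1 ⊆ (closure (⋃₀ s))ᶜ := by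
        rintro ⟨A, hAcl⟩ hAK
        simp only [mem_setOf_eq] at hAK ⊢
        have hKA : K ⊆ Aᶜ := fun x hx hxA => hAK hxA hx
        have hx : ∀ x : K, ∃ U ∈ b', (x : X) ∈ U ∧ closure U ⊆ Aᶜ :=
          fun ⟨x, hxK⟩ => hb'base x Aᶜ hAcl.isOpen_compl (hKA hxK)
        choose U hUb' hxU hUA using hx
        obtain ⟨t, ht⟩ := hK.elim_finite_subcover U
          (fun x => hb.isOpen (hUb' x).1)
          (fun x hx => mem_iUnion.2 ⟨⟨x, hx⟩, hxU ⟨x, hx⟩⟩)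
        refine ⟨U '' t, ⟨⟨t.finite_toSet.image U, by rintro _ ⟨x, _, rfl⟩; exact hUb' x⟩, ?_⟩, ?_⟩
        · intro y hyK
          obtain ⟨x, hxt, hyU⟩ := mem_iUnion₂.1 (ht hyK)
          exact ⟨U x, ⟨x, hxt, rfl⟩, hyU⟩
        · obtain ⟨_, hsub⟩ := hcomp (U '' t) (t.finite_toSet.image U)
            (by rintro _ ⟨x, _, rfl⟩; exact hUb' x)
          intro y hy hycl
          obtain ⟨W, hW, hyW⟩ := mem_iUnion₂.1 (hsub hycl)
          obtain ⟨x, hxt, rfl⟩ := hW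
          exact hUA x hyW hy
      have heq : {A : CL X | A.1 ⊆ Kᶜ} =
          ⋃ s ∈ {s : Set (Set X) | (s.Finite ∧ s ⊆ b') ∧ K ⊆ ⋃₀ s},
            {A : CL X | A.1 ⊆ (closure (⋃₀ s))ᶜ} := by
        ext A
        simp only [mem_setOf_eq, mem_iUnion, exists_prop]
        constructor
        · intro hA
          obtain ⟨s, hs1, hs2⟩ := key A hA
          exact ⟨s, hs1, hs2⟩
        · rintro ⟨s, ⟨_, hKs⟩, hAs⟩
          intro y hy hyK
          exact hAs hy (subset_closure (hKs hyK))
      rw [heq, ← sUnion_image]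
      refine TopologicalSpace.GenerateOpen.sUnion _ ?_
      rintro _ ⟨s, hs, rfl⟩
      exact TopologicalSpace.GenerateOpen.basic _ (Or.inl ⟨s, hs.1, rfl⟩)
    · -- hit set: union of hit sets of basis elements inside V
      have : {A : CL X | (A.1 ∩ V).Nonempty} =
          ⋃ W ∈ {W ∈ b | W ⊆ V}, {A : CL X | (A.1 ∩ W).Nonempty} := by
        ext A
        simp only [mem_setOf_eq, mem_iUnion, exists_prop, mem_sep_iff]
        constructor
        · rintro ⟨x, hxA, hxV⟩
          obtain ⟨W, hWb, hxW, hWV⟩ := hb.exists_subset_of_mem_open hxV hV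
          exact ⟨W, ⟨hWb, hWV⟩, x, hxA, hxW⟩
        · rintro ⟨W, ⟨_, hWV⟩, x, hxA, hxW⟩
          exact ⟨x, hxA, hWV hxW⟩
      rw [this, ← sUnion_image]
      refine TopologicalSpace.GenerateOpen.sUnion _ ?_
      rintro _ ⟨W, hW, rfl⟩
      exact TopologicalSpace.GenerateOpen.basic _ (Or.inr ⟨W, hW.1, rfl⟩)

end Aux

/-- If `X` is locally compact Hausdorff second-countable, then the Fell topology on `CL(X)`
is compact and metrizable, hence second countable. -/
theorem stmt4 (X : Type*) [TopologicalSpace X] [LocallyCompactSpace X] [T2Space X]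
    [SecondCountableTopology X] :
    @CompactSpace (CL X) (fellTop X) ∧ @TopologicalSpace.MetrizableSpace (CL X) (fellTop X) ∧
      @SecondCountableTopology (CL X) (fellTop X) := by
  letI : TopologicalSpace (CL X) := fellTop X
  haveI : CompactSpace (CL X) := fell_compactSpace
  haveI : T2Space (CL X) := fell_t2
  haveI : SecondCountableTopology (CL X) := fell_secondCountable
  exact ⟨‹_›, inferInstance, ‹_›⟩
end

section
/- Let X be a topological space and (Y,d) a metric space. The family 𝓑 consisting of the full space C_od(X,Y) together with all sets B_K(f,ε) = {g : K ⊆ dom(g), and sup_{x∈K} d(f(x),g(x)) < ε}, for f a nonempty continuous partial function with open domain, K a nonempty compact subset of dom(f), and ε > 0, is a basis for a topology on C_od(X,Y). -/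
open Set Topology Filter

/-- `dK f g K = sup_{x ∈ K} d (f x) (g x)` (meaningful when `K ⊆ dom f ∩ dom g`). -/
noncomputable def dK {X Y : Type*} [TopologicalSpace X] [MetricSpace Y]
    (f g : Cod X Y) (K : Set X) : ℝ :=
  sSup {r | ∃ (x : X) (hf : x ∈ f.dom) (hg : x ∈ g.dom), x ∈ K ∧
    r = dist (f.toFun ⟨x, hf⟩) (g.toFun ⟨x, hg⟩)}

/-- The basic set `B_K(f,ε)` of the topology of compact convergence. -/
def cball {X Y : Type*} [TopologicalSpace X] [MetricSpace Y]
    (f : Cod X Y) (K : Set X) (ε : ℝ) : Set (Cod X Y) :=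
  {g | K ⊆ g.dom ∧ dK f g K < ε}

/-- The topology of compact convergence on `Cod X Y`. -/
def tauCC (X Y : Type*) [TopologicalSpace X] [MetricSpace Y] : TopologicalSpace (Cod X Y) :=
  TopologicalSpace.generateFrom
    (insert Set.univ
      {S | ∃ (f : Cod X Y) (K : Set X) (ε : ℝ), K.Nonempty ∧ IsCompact K ∧ K ⊆ f.dom ∧
        0 < ε ∧ S = cball f K ε})

section Aux

variable {X Y : Type*} [TopologicalSpace X] [MetricSpace Y]

/-- The set whose supremum is `dK f g K`. -/
def dset (f g : Cod X Y) (K : Set X) : Set ℝ :=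
  {r | ∃ (x : X) (hf : x ∈ f.dom) (hg : x ∈ g.dom), x ∈ K ∧
    r = dist (f.toFun ⟨x, hf⟩) (g.toFun ⟨x, hg⟩)}

lemma dK_eq (f g : Cod X Y) (K : Set X) : dK f g K = sSup (dset f g K) := rfl

lemma image_isCompact (f : Cod X Y) {K : Set X} (hK : IsCompact K) (hKf : K ⊆ f.dom) :
    IsCompact (f.image K) := by
  have : IsCompact ((↑) ⁻¹' K : Set f.dom) := by
    have : ((↑) ⁻¹' K : Set f.dom) = range (fun x : K => (⟨x, hKf x.2⟩ : f.dom)) := by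
      ext ⟨y, hy⟩
      simp only [mem_preimage, mem_range]
      constructor
      · intro h; exact ⟨⟨y, h⟩, rfl⟩
      · rintro ⟨⟨x, hx⟩, h⟩
        have : x = y := congrArg Subtype.val h
        exact this ▸ hx
    rw [this]
    haveI : CompactSpace K := isCompact_iff_compactSpace.mp hK
    exact isCompact_range (Continuous.subtype_mk continuous_subtype_val _)
  exact this.image f.continuous_toFun

lemma dset_bddAbove (f g : Cod X Y) {K : Set X} (hK : IsCompact K)
    (hKf : K ⊆ f.dom) (hKg : K ⊆ g.dom) : BddAbove (dset f g K) := by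
  have hb : Bornology.IsBounded (f.image K ∪ g.image K) :=
    ((image_isCompact f hK hKf).union (image_isCompact g hK hKg)).isBounded
  obtain ⟨C, hC⟩ := Metric.isBounded_iff.mp hb
  refine ⟨C, ?_⟩
  rintro r ⟨x, hf, hg, hxK, rfl⟩
  exact hC (Or.inl ⟨⟨x, hf⟩, hxK, rfl⟩) (Or.inr ⟨⟨x, hg⟩, hxK, rfl⟩)

lemma dist_le_dK (f g : Cod X Y) {K : Set X} (hK : IsCompact K)
    (hKf : K ⊆ f.dom) (hKg : K ⊆ g.dom) {x : X} (hx : x ∈ K) :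
    dist (f.toFun ⟨x, hKf hx⟩) (g.toFun ⟨x, hKg hx⟩) ≤ dK f g K :=
  le_csSup (dset_bddAbove f g hK hKf hKg) ⟨x, hKf hx, hKg hx, hx, rfl⟩

lemma dK_nonneg (f g : Cod X Y) {K : Set X} (hK : IsCompact K) (hne : K.Nonempty)
    (hKf : K ⊆ f.dom) (hKg : K ⊆ g.dom) : 0 ≤ dK f g K := by
  obtain ⟨x, hx⟩ := hne
  exact le_trans dist_nonneg (dist_le_dK f g hK hKf hKg hx)

lemma dK_self (g : Cod X Y) {K : Set X} (hne : K.Nonempty) (hKg : K ⊆ g.dom) :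
    dK g g K = 0 := by
  rw [dK_eq]
  have : dset g g K = {0} := by
    apply Subset.antisymm
    · rintro r ⟨x, hf, hg, hxK, rfl⟩
      simp
    · rintro r (rfl : r = 0)
      obtain ⟨x, hx⟩ := hne
      exact ⟨x, hKg hx, hKg hx, hx, (dist_self _).symm⟩
  rw [this, csSup_singleton]

lemma dK_mono (f g : Cod X Y) {K K' : Set X} (hK : IsCompact K)
    (hKf : K ⊆ f.dom) (hKg : K ⊆ g.dom) (hne : K'.Nonempty) (hsub : K' ⊆ K) :
    dK f g K' ≤ dK f g K := by
  apply csSup_le_csSup (dset_bddAbove f g hK hKf hKg)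
  · obtain ⟨x, hx⟩ := hne
    exact ⟨_, x, hKf (hsub hx), hKg (hsub hx), hx, rfl⟩
  · rintro r ⟨x, hf, hg, hxK, rfl⟩
    exact ⟨x, hf, hg, hsub hxK, rfl⟩

lemma dK_triangle (f g h : Cod X Y) {K : Set X} (hK : IsCompact K) (hne : K.Nonempty)
    (hKf : K ⊆ f.dom) (hKg : K ⊆ g.dom) (hKh : K ⊆ h.dom) :
    dK f h K ≤ dK f g K + dK g h K := by
  rw [dK_eq]
  apply Real.sSup_le
  · rintro r ⟨x, hf, hh, hxK, rfl⟩
    calc dist (f.toFun ⟨x, hf⟩) (h.toFun ⟨x, hh⟩)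
        ≤ dist (f.toFun ⟨x, hf⟩) (g.toFun ⟨x, hKg hxK⟩)
          + dist (g.toFun ⟨x, hKg hxK⟩) (h.toFun ⟨x, hh⟩) := dist_triangle _ _ _
      _ ≤ dK f g K + dK g h K :=
          add_le_add (dist_le_dK f g hK hKf hKg hxK) (dist_le_dK g h hK hKg hKh hxK)
  · exact add_nonneg (dK_nonneg f g hK hne hKf hKg) (dK_nonneg g h hK hne hKg hKh)

lemma isTopologicalBasis_generateFrom_of {α : Type*} (s : Set (Set α))
    (h1 : ∀ t₁ ∈ s, ∀ t₂ ∈ s, ∀ x ∈ t₁ ∩ t₂, ∃ t₃ ∈ s, x ∈ t₃ ∧ t₃ ⊆ t₁ ∩ t₂)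
    (h2 : ⋃₀ s = Set.univ) :
    @TopologicalSpace.IsTopologicalBasis α (TopologicalSpace.generateFrom s) s :=
  @TopologicalSpace.IsTopologicalBasis.mk α (TopologicalSpace.generateFrom s) s h1 h2 rfl

end Aux

/-- The family consisting of the whole space together with the sets `B_K(f,ε)` is a basis
for a topology on `C_od(X,Y)`. -/
theorem stmt6 (X Y : Type*) [TopologicalSpace X] [MetricSpace Y] :
    @TopologicalSpace.IsTopologicalBasis (Cod X Y)
      (TopologicalSpace.generateFrom
        (insert Set.univ
          {S | ∃ (f : Cod X Y) (K : Set X) (ε : ℝ), K.Nonempty ∧ IsCompact K ∧ K ⊆ f.dom ∧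
            0 < ε ∧ S = cball f K ε}))
      (insert Set.univ
        {S | ∃ (f : Cod X Y) (K : Set X) (ε : ℝ), K.Nonempty ∧ IsCompact K ∧ K ⊆ f.dom ∧
          0 < ε ∧ S = cball f K ε}) := by
  refine isTopologicalBasis_generateFrom_of _ ?_ ?_
  · -- intersection property
    rintro t₁ ht₁ t₂ ht₂ g hg
    -- handle the `univ` cases
    rcases ht₁ with rfl | ⟨f₁, K₁, ε₁, hne₁, hK₁, hKf₁, hε₁, rfl⟩
    · rcases ht₂ with rfl | ht₂
      · exact ⟨univ, Or.inl rfl, mem_univ g, by simp⟩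
      · exact ⟨t₂, Or.inr ht₂, hg.2, by simp⟩
    rcases ht₂ with rfl | ⟨f₂, K₂, ε₂, hne₂, hK₂, hKf₂, hε₂, rfl⟩
    · exact ⟨cball f₁ K₁ ε₁, Or.inr ⟨f₁, K₁, ε₁, hne₁, hK₁, hKf₁, hε₁, rfl⟩, hg.1, by simp⟩
    obtain ⟨⟨hg₁d, hg₁⟩, hg₂d, hg₂⟩ := hg
    set δ : ℝ := min (ε₁ - dK f₁ g K₁) (ε₂ - dK f₂ g K₂) with hδdef
    have hδ : 0 < δ := lt_min (by linarith) (by linarith)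
    set K : Set X := K₁ ∪ K₂ with hKdef
    have hKc : IsCompact K := hK₁.union hK₂
    have hKg : K ⊆ g.dom := union_subset hg₁d hg₂d
    have hKne : K.Nonempty := hne₁.mono subset_union_left
    refine ⟨cball g K δ, Or.inr ⟨g, K, δ, hKne, hKc, hKg, hδ, rfl⟩, ?_, ?_⟩
    · exact ⟨hKg, by rw [dK_self g hKne hKg]; exact hδ⟩
    · rintro h ⟨hKh, hdKh⟩
      have h₁d : K₁ ⊆ h.dom := subset_union_left.trans hKh
      have h₂d : K₂ ⊆ h.dom := subset_union_right.trans hKh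
      constructor
      · refine ⟨h₁d, ?_⟩
        have t1 : dK f₁ h K₁ ≤ dK f₁ g K₁ + dK g h K₁ :=
          dK_triangle f₁ g h hK₁ hne₁ hKf₁ hg₁d h₁d
        have t2 : dK g h K₁ ≤ dK g h K :=
          dK_mono g h hKc hKg hKh hne₁ subset_union_left
        have : dK g h K < δ := hdKh
        have : dK g h K₁ < ε₁ - dK f₁ g K₁ :=
          lt_of_le_of_lt t2 (lt_of_lt_of_le hdKh (min_le_left _ _))
        linarith
      · refine ⟨h₂d, ?_⟩
        have t1 : dK f₂ h K₂ ≤ dK f₂ g K₂ + dK g h K₂ :=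
          dK_triangle f₂ g h hK₂ hne₂ hKf₂ hg₂d h₂d
        have t2 : dK g h K₂ ≤ dK g h K :=
          dK_mono g h hKc hKg hKh hne₂ subset_union_right
        have : dK g h K₂ < ε₂ - dK f₂ g K₂ :=
          lt_of_le_of_lt t2 (lt_of_lt_of_le hdKh (min_le_right _ _))
        linarith
  · -- the family covers the space
    exact sUnion_eq_univ_iff.mpr fun g => ⟨univ, Or.inl rfl, mem_univ g⟩
end

section
/- Let X be a locally compact Hausdorff space and Y a metric space. If a net (f_λ) of continuous partial functions from X to Y with open domains converges in the topology of compact convergence to a partial function f with open domain, then f is continuous. -/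
open Set Topology Filter

/-- Let `X` be locally compact Hausdorff and `Y` a metric space. If a net of continuous
partial functions with open domains (represented by open sets `U i` together with functions
`F i` continuous on `U i`) converges in the topology of compact convergence to a partial
function `f` with open domain `Ω`, then `f` is continuous on `Ω`. -/
theorem stmt8 {X Y : Type*} [TopologicalSpace X] [LocallyCompactSpace X] [T2Space X]
    [MetricSpace Y] {ι : Type*} (l : Filter ι) [l.NeBot]
    (U : ι → Set X) (F : ι → X → Y)
    (hU : ∀ i, IsOpen (U i)) (hF : ∀ i, ContinuousOn (F i) (U i))
    (Ω : Set X) (f : X → Y) (hΩ : IsOpen Ω)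
    (hconv : ∀ K : Set X, K.Nonempty → IsCompact K → K ⊆ Ω → ∀ ε > (0 : ℝ),
      ∀ᶠ i in l, K ⊆ U i ∧ ∀ x ∈ K, dist (F i x) (f x) < ε) :
    ContinuousOn f Ω := by
  intro x hx
  obtain ⟨K, hKc, hxK, hKΩ⟩ := exists_compact_subset hΩ hx
  have hKne : K.Nonempty := ⟨x, interior_subset hxK⟩
  have htu : TendstoUniformlyOn F f l K := by
    rw [Metric.tendstoUniformlyOn_iff]
    intro ε hε
    filter_upwards [hconv K hKne hKc hKΩ ε hε] with i hi y hy
    rw [dist_comm]; exact hi.2 y hy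
  have hev : ∀ᶠ i in l, ContinuousOn (F i) K := by
    filter_upwards [hconv K hKne hKc hKΩ 1 one_pos] with i hi
    exact (hF i).mono hi.1
  have hcK : ContinuousOn f K := htu.continuousOn hev.frequently
  exact (hcK.continuousAt (mem_interior_iff_mem_nhds.mp hxK)).continuousWithinAt
end

section
/- Let X be locally compact Hausdorff second countable with countable basis {U_n} and compact exhaustions K_{mn} ⊆ int(K_{(m+1)n}) with ⋃_m K_{mn} = U_n, and let (Y,d) be a metric space with d ≤ 1. Then β(f,g) = Σ_{n,m} 2^{−(m+n)} β_{mn}(f,g) is a metric on C_od(X,Y), i.e., β(f,g) = 0 implies f = g. -/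
open Set Topology Filter

open scoped Classical in
/-- The building block `β_{mn}`: here `W` plays the role of `int K_{(m+1)n}` and
`Kc` the role of `K_{mn}`. -/
noncomputable def beta0 {X Y : Type*} [TopologicalSpace X] [MetricSpace Y]
    (W Kc : Set X) (f g : Cod X Y) : ℝ :=
  if (f.domᶜ ∩ W).Nonempty then (if (g.domᶜ ∩ W).Nonempty then 0 else 1)
  else (if (g.domᶜ ∩ W).Nonempty then 1 else dK f g Kc)

/-- The metric `β(f,g) = Σ_{n,m} 2^{-(m+n)} β_{mn}(f,g)` (indices shifted to start at 0). -/
noncomputable def beta {X Y : Type*} [TopologicalSpace X] [MetricSpace Y]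
    (K : ℕ → ℕ → Set X) (f g : Cod X Y) : ℝ :=
  ∑' (n : ℕ) (m : ℕ), ((2 : ℝ) ^ (m + n + 2))⁻¹ *
    beta0 (interior (K (m + 1) n)) (K m n) f g


section Aux

variable {X Y : Type*} [TopologicalSpace X] [MetricSpace Y]

lemma dK_nonneg_s11 (f g : Cod X Y) (Kc : Set X) : 0 ≤ dK f g Kc := by
  apply Real.sSup_nonneg
  rintro r ⟨x, hf, hg, hx, rfl⟩
  exact dist_nonneg

lemma dK_le_one (hd : ∀ y₁ y₂ : Y, dist y₁ y₂ ≤ 1) (f g : Cod X Y) (Kc : Set X) :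
    dK f g Kc ≤ 1 := by
  apply Real.sSup_le
  · rintro r ⟨x, hf, hg, hx, rfl⟩
    exact hd _ _
  · norm_num

lemma beta0_nonneg (W Kc : Set X) (f g : Cod X Y) : 0 ≤ beta0 W Kc f g := by
  unfold beta0
  split_ifs
  all_goals first | exact dK_nonneg_s11 f g Kc | norm_num

lemma beta0_le_one (hd : ∀ y₁ y₂ : Y, dist y₁ y₂ ≤ 1) (W Kc : Set X) (f g : Cod X Y) :
    beta0 W Kc f g ≤ 1 := by
  unfold beta0
  split_ifs
  all_goals first | exact dK_le_one hd f g Kc | norm_num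

end Aux

/-- `β` is a metric on `C_od(X,Y)`: in particular `β(f,g) = 0` implies `f = g`, i.e. the
domains coincide and the functions agree on the common domain. -/
theorem stmt11 {X Y : Type*} [TopologicalSpace X] [LocallyCompactSpace X] [T2Space X]
    [SecondCountableTopology X] [MetricSpace Y]
    (U : ℕ → Set X) (K : ℕ → ℕ → Set X)
    (hUbasis : TopologicalSpace.IsTopologicalBasis (Set.range U))
    (hUne : ∀ n, (U n).Nonempty)
    (hKcomp : ∀ m n, IsCompact (K m n)) (hKne : ∀ m n, (K m n).Nonempty)
    (hKsub : ∀ m n, K m n ⊆ interior (K (m + 1) n))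
    (hKU : ∀ n, ⋃ m, K m n = U n)
    (hd : ∀ y₁ y₂ : Y, dist y₁ y₂ ≤ 1)
    (f g : Cod X Y) (hfg : beta K f g = 0) :
    f.dom = g.dom ∧
      ∀ (x : X) (hf : x ∈ f.dom) (hg : x ∈ g.dom), f.toFun ⟨x, hf⟩ = g.toFun ⟨x, hg⟩ := by
  
  unfold beta at hfg
  have ha_nonneg : ∀ n m : ℕ, 0 ≤ ((2 : ℝ) ^ (m + n + 2))⁻¹ *
      beta0 (interior (K (m + 1) n)) (K m n) f g := fun n m =>
    mul_nonneg (by positivity) (beta0_nonneg _ _ _ _)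
  have ha_le : ∀ n m : ℕ, ((2 : ℝ) ^ (m + n + 2))⁻¹ *
      beta0 (interior (K (m + 1) n)) (K m n) f g ≤ (1/2 : ℝ) ^ (m + n + 2) := by
    intro n m
    calc ((2 : ℝ) ^ (m + n + 2))⁻¹ * beta0 (interior (K (m + 1) n)) (K m n) f g
        ≤ ((2 : ℝ) ^ (m + n + 2))⁻¹ * 1 :=
          mul_le_mul_of_nonneg_left (beta0_le_one hd _ _ _ _) (by positivity)
      _ = (1/2 : ℝ) ^ (m + n + 2) := by rw [mul_one, one_div, inv_pow]
  have heq : ∀ n, (fun m => (1/2 : ℝ) ^ (m + n + 2)) =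
      fun m => (1/2 : ℝ) ^ m * (1/2 : ℝ) ^ (n + 2) := by
    intro n; funext m; rw [← pow_add]; ring_nf
  have hbound : ∀ n, Summable (fun m => (1/2 : ℝ) ^ (m + n + 2)) := by
    intro n; rw [heq n]; exact summable_geometric_two.mul_right _
  have hsum_inner : ∀ n, Summable (fun m => ((2 : ℝ) ^ (m + n + 2))⁻¹ *
      beta0 (interior (K (m + 1) n)) (K m n) f g) := fun n =>
    Summable.of_nonneg_of_le (ha_nonneg n) (ha_le n) (hbound n)
  have hsum_outer : Summable (fun n => ∑' m, ((2 : ℝ) ^ (m + n + 2))⁻¹ *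
      beta0 (interior (K (m + 1) n)) (K m n) f g) := by
    refine Summable.of_nonneg_of_le (fun n => tsum_nonneg (ha_nonneg n))
      (fun n => ?_) ((summable_geometric_two.mul_right ((1/2 : ℝ) ^ 2)).mul_left 2)
    calc ∑' m, ((2 : ℝ) ^ (m + n + 2))⁻¹ * beta0 (interior (K (m + 1) n)) (K m n) f g
        ≤ ∑' m, (1/2 : ℝ) ^ (m + n + 2) :=
          Summable.tsum_le_tsum (ha_le n) (hsum_inner n) (hbound n)
      _ = 2 * ((1/2 : ℝ) ^ n * (1/2 : ℝ) ^ 2) := by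
          rw [heq n, tsum_mul_right, tsum_geometric_two, pow_add]
  have h1 : ∀ n, ∑' m, ((2 : ℝ) ^ (m + n + 2))⁻¹ *
      beta0 (interior (K (m + 1) n)) (K m n) f g = 0 := by
    intro n
    refine le_antisymm ?_ (tsum_nonneg (ha_nonneg n))
    calc ∑' m, ((2 : ℝ) ^ (m + n + 2))⁻¹ * beta0 (interior (K (m + 1) n)) (K m n) f g
        ≤ ∑' (n : ℕ) (m : ℕ), ((2 : ℝ) ^ (m + n + 2))⁻¹ *
            beta0 (interior (K (m + 1) n)) (K m n) f g :=
          Summable.le_tsum hsum_outer n (fun j _ => tsum_nonneg (ha_nonneg j))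
      _ = 0 := hfg
  have hbeta0 : ∀ n m, beta0 (interior (K (m + 1) n)) (K m n) f g = 0 := by
    intro n m
    have h2 : ((2 : ℝ) ^ (m + n + 2))⁻¹ *
        beta0 (interior (K (m + 1) n)) (K m n) f g = 0 := by
      refine le_antisymm ?_ (ha_nonneg n m)
      calc ((2 : ℝ) ^ (m + n + 2))⁻¹ * beta0 (interior (K (m + 1) n)) (K m n) f g
          ≤ ∑' m, ((2 : ℝ) ^ (m + n + 2))⁻¹ *
              beta0 (interior (K (m + 1) n)) (K m n) f g :=
            Summable.le_tsum (hsum_inner n) m (fun j _ => ha_nonneg n j)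
        _ = 0 := h1 n
    simp only [mul_eq_zero, inv_eq_zero] at h2
    rcases h2 with h | h
    · exact absurd h (by positivity)
    · exact h
  -- W ⊆ U n
  have hWU : ∀ n m, interior (K (m + 1) n) ⊆ U n := by
    intro n m
    refine interior_subset.trans ?_
    rw [← hKU n]
    exact Set.subset_iUnion (fun m => K m n) (m + 1)
  -- key: from a subset relation derive emptiness of complement intersection
  have hdom : f.dom = g.dom := by
    apply Set.Subset.antisymm
    · intro x hx
      by_contra hxg
      obtain ⟨v, ⟨n, rfl⟩, hxv, hvs⟩ := hUbasis.exists_subset_of_mem_open hx f.isOpen_dom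
      have hxU : x ∈ ⋃ m, K m n := by rw [hKU n]; exact hxv
      obtain ⟨_, ⟨m, rfl⟩, hxK⟩ := hxU
      have hfe : ¬ (f.domᶜ ∩ interior (K (m + 1) n)).Nonempty := by
        rintro ⟨z, hz1, hz2⟩
        exact hz1 (hvs (hWU n m hz2))
      have hge : (g.domᶜ ∩ interior (K (m + 1) n)).Nonempty :=
        ⟨x, hxg, hKsub m n hxK⟩
      have := hbeta0 n m
      unfold beta0 at this
      rw [if_neg hfe, if_pos hge] at this
      norm_num at this
    · intro x hx
      by_contra hxf
      obtain ⟨v, ⟨n, rfl⟩, hxv, hvs⟩ := hUbasis.exists_subset_of_mem_open hx g.isOpen_dom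
      have hxU : x ∈ ⋃ m, K m n := by rw [hKU n]; exact hxv
      obtain ⟨_, ⟨m, rfl⟩, hxK⟩ := hxU
      have hge : ¬ (g.domᶜ ∩ interior (K (m + 1) n)).Nonempty := by
        rintro ⟨z, hz1, hz2⟩
        exact hz1 (hvs (hWU n m hz2))
      have hfe : (f.domᶜ ∩ interior (K (m + 1) n)).Nonempty :=
        ⟨x, hxf, hKsub m n hxK⟩
      have := hbeta0 n m
      unfold beta0 at this
      rw [if_pos hfe, if_neg hge] at this
      norm_num at this
  refine ⟨hdom, ?_⟩
  intro x hf hg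
  have hopen : IsOpen (f.dom ∩ g.dom) := f.isOpen_dom.inter g.isOpen_dom
  obtain ⟨v, ⟨n, rfl⟩, hxv, hvs⟩ :=
    hUbasis.exists_subset_of_mem_open (Set.mem_inter hf hg) hopen
  have hxU : x ∈ ⋃ m, K m n := by rw [hKU n]; exact hxv
  obtain ⟨_, ⟨m, rfl⟩, hxK⟩ := hxU
  have hfe : ¬ (f.domᶜ ∩ interior (K (m + 1) n)).Nonempty := by
    rintro ⟨z, hz1, hz2⟩
    exact hz1 (hvs (hWU n m hz2)).1
  have hge : ¬ (g.domᶜ ∩ interior (K (m + 1) n)).Nonempty := by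
    rintro ⟨z, hz1, hz2⟩
    exact hz1 (hvs (hWU n m hz2)).2
  have hdk : dK f g (K m n) = 0 := by
    have := hbeta0 n m
    unfold beta0 at this
    rwa [if_neg hfe, if_neg hge] at this
  have hmem : dist (f.toFun ⟨x, hf⟩) (g.toFun ⟨x, hg⟩) ≤ dK f g (K m n) := by
    apply le_csSup
    · exact ⟨1, by rintro r ⟨y, hyf, hyg, hy, rfl⟩; exact hd _ _⟩
    · exact ⟨x, hf, hg, hxK, rfl⟩
  rw [hdk] at hmem
  exact dist_le_zero.mp hmem
end
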